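/- For all n ≥ 2 and all 1 ≤ j ≤ n-1, θ(n)·b(n-1,j) − 3·a(n-1,j) ≥ 0. (That is, the capacity u(n,j) := θ(n)·b(n-1,j) − 3·a(n-1,j) of the internal arc n → j is non-negative.) -/

import Mathlib

/-- `F n = (a n ·, b n ·, φ n)` from the recursive construction;
    `φ 1 := 1` by convention. -/
def F : ℕ → ((ℕ → ℚ) × (ℕ → ℚ) × ℚ)
  | 0 => (fun _ => 0, fun _ => 0, 1)
  | 1 => (fun j => if j = 1 then 1 else 0, fun j => if j = 1 then 1 else 0, 1)
  | (n+2) =>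
      let p := F (n+1)
      let th : ℚ := 3 * p.1 (n+1)
      let ph : ℚ := if n = 0 then 4
        else 4 * ∑ j ∈ Finset.Icc 1 (n+1), (th * p.2.1 j - 3 * p.1 j)
      (fun j => if j = n+2 then ph else 4 * p.1 j,
       fun j => if j = n+2 then 1 else (1 + th) * p.2.1 j,
       ph)

/-- coefficient `a(n,j)` -/
def a (n j : ℕ) : ℚ := (F n).1 j
/-- coefficient `b(n,j)` -/
def b (n j : ℕ) : ℚ := (F n).2.1 j
/-- `φ(n)` -/
def phi (n : ℕ) : ℚ := (F n).2.2
/-- `θ(n) = 3·a(n-1,n-1)` -/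
def theta (n : ℕ) : ℚ := 3 * a (n-1) (n-1)

lemma a_rec (m j : ℕ) : a (m+2) j = if j = m+2 then phi (m+2) else 4 * a (m+1) j := by
  simp [a, phi, F]

lemma b_rec (m j : ℕ) : b (m+2) j = if j = m+2 then 1 else (1 + 3 * a (m+1) (m+1)) * b (m+1) j := by
  simp [a, b, F]

lemma phi_rec (m : ℕ) (hm : 1 ≤ m) :
    phi (m+2) = 4 * ∑ j ∈ Finset.Icc 1 (m+1),
      (3 * a (m+1) (m+1) * b (m+1) j - 3 * a (m+1) j) := by
  have : m ≠ 0 := by omega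
  simp [a, b, phi, F, this]

lemma b_diag : ∀ n, 1 ≤ n → b n n = 1
  | 1, _ => by simp [b, F]
  | (m+2), _ => by simp [b_rec]

def Good (n : ℕ) : Prop :=
  (∀ j, 1 ≤ j → j ≤ n → 1 ≤ a n j ∧ 1 ≤ b n j ∧ a n j ≤ a n n * b n j) ∧
  (n = 1 ∨ 4 ≤ a n n)

lemma good1 : Good 1 := by
  constructor
  · intro j h1 h2
    have : j = 1 := by omega
    subst this
    norm_num [a, b, F]
  · exact Or.inl rfl

lemma good2 : Good 2 := by
  have ha1 : a 2 1 = 4 := by norm_num [a_rec]; norm_num [a, F]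
  have ha2 : a 2 2 = 4 := by norm_num [a_rec]; norm_num [phi, F]
  have hb1 : b 2 1 = 4 := by norm_num [b_rec]; norm_num [a, b, F]
  have hb2 : b 2 2 = 1 := by norm_num [b_rec]
  constructor
  · intro j h1 h2
    interval_cases j <;> simp [ha1, ha2, hb1, hb2] 
  · right; rw [ha2]

lemma good_step (p : ℕ) (ih : Good (p+2)) : Good (p+3) := by
  obtain ⟨ihj, ihc⟩ := ih
  set c : ℚ := a (p+2) (p+2) with hc
  have hc4 : 4 ≤ c := by
    rcases ihc with h | h
    · omega
    · exact h
  have hd : (1:ℚ) ≤ a (p+2) (p+1) := (ihj (p+1) (by omega) (by omega)).1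
  have had : a (p+2) (p+1) = 4 * a (p+1) (p+1) := by
    rw [a_rec]; simp
  have hbd : b (p+2) (p+1) = 1 + 3 * a (p+1) (p+1) := by
    rw [b_rec]; simp [b_diag (p+1) (by omega)]
  set d : ℚ := a (p+1) (p+1) with hdd
  have hd4 : (1:ℚ) ≤ 4 * d := by rw [← had]; exact hd
  -- nonnegativity of each summand
  have hnn : ∀ k ∈ Finset.Icc 1 (p+2), (0:ℚ) ≤ 3 * c * b (p+2) k - 3 * a (p+2) k := by
    intro k hk
    simp only [Finset.mem_Icc] at hk
    have h := (ihj k hk.1 hk.2).2.2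
    linarith [h]
  have hterm : 3 * c ≤ 3 * c * b (p+2) (p+1) - 3 * a (p+2) (p+1) := by
    rw [had, hbd]
    nlinarith
  have hsum : 3 * c ≤ ∑ j ∈ Finset.Icc 1 (p+2), (3 * c * b (p+2) j - 3 * a (p+2) j) := by
    have := Finset.single_le_sum hnn (show p+1 ∈ Finset.Icc 1 (p+2) by simp)
    linarith
  have hphi : 12 * c ≤ phi (p+3) := by
    have := phi_rec (p+1) (by omega)
    rw [show p+1+2 = p+3 from rfl] at this
    rw [this]
    linarith
  have haa : a (p+3) (p+3) = phi (p+3) := by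
    have := a_rec (p+1) (p+3)
    simpa using this
  constructor
  · intro j h1 h2
    by_cases hj : j = p + 3
    · subst hj
      have hbb : b (p+3) (p+3) = 1 := b_diag (p+3) (by omega)
      refine ⟨?_, ?_, ?_⟩
      · rw [haa]; linarith
      · rw [hbb]
      · rw [hbb, mul_one]
    · have hj2 : j ≤ p + 2 := by omega
      have haj : a (p+3) j = 4 * a (p+2) j := by
        have := a_rec (p+1) j; simp [hj] at this; simpa using this
      have hbj : b (p+3) j = (1 + 3 * c) * b (p+2) j := by
        have := b_rec (p+1) j; simp [hj] at this; simpa using this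
      obtain ⟨h1a, h1b, h1ab⟩ := ihj j h1 hj2
      refine ⟨?_, ?_, ?_⟩
      · rw [haj]; linarith
      · rw [hbj]; nlinarith
      · rw [haj, hbj, haa]
        nlinarith [mul_le_mul_of_nonneg_right hphi (by linarith : (0:ℚ) ≤ b (p+2) j),
          mul_le_mul_of_nonneg_left h1ab (show (0:ℚ) ≤ 4 by norm_num)]
  · right
    rw [haa]; linarith

lemma good : ∀ n, 1 ≤ n → Good n := by
  intro n hn
  induction n, hn using Nat.le_induction with
  | base => exact good1
  | succ n hn ih =>
    match n, hn with
    | 1, _ => exact good2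
    | (p+2), _ => exact good_step p ih

theorem internal_capacity_nonneg (n : ℕ) (hn : 2 ≤ n) :
    ∀ j : ℕ, 1 ≤ j → j ≤ n - 1 →
      0 ≤ theta n * b (n-1) j - 3 * a (n-1) j := by
  intro j h1 h2
  obtain ⟨m, rfl⟩ : ∃ m, n = m + 1 := ⟨n - 1, by omega⟩
  simp only [theta, Nat.add_sub_cancel] at *
  have hg := (good m (by omega)).1 j h1 h2
  nlinarith [hg.2.2]
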